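/- Let λ, ℓ, n, t be positive integers with n ≥ 6 and t·log₂ n ≥ 2λ. Let a_1, …, a_ℓ be a sequence of elements of an arbitrary set S, and let x ∈ S be an element that appears at most t times in the sequence. Let r_1, r_2, … be i.i.d. uniform random variables on {0, …, λ−1}, and let the connector positions be b_j = j·λ + r_1 + ⋯ + r_j for those j with b_j ≤ ℓ. Then with probability at least 1 − 1/n², the number of connector positions b_j with a_{b_j} = x is at most t·(log₂ n)²/λ. -/

import Mathlib

open Finset

attribute [local instance] Classical.propDecidable

def hitC (lam m : ℕ) (r : Fin m → Fin lam) (p : ℤ) : Prop :=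
  p = 0 ∨ ∃ j : Fin m, ((j : ℤ) + 1) * lam + ∑ i ∈ Finset.Iic j, (r i : ℤ) = p

lemma hitC_pos {lam m : ℕ} (hlam : 0 < lam) {r : Fin m → Fin lam} {p : ℤ}
    (h : hitC lam m r p) : p = 0 ∨ (lam : ℤ) ≤ p := by
  rcases h with h | ⟨j, hj⟩
  · exact Or.inl h
  · right
    have h1 : (1 : ℤ) ≤ (j : ℤ) + 1 := by omega
    have h2 : (0 : ℤ) ≤ ∑ i ∈ Finset.Iic j, (r i : ℤ) :=
      Finset.sum_nonneg fun i _ => by positivity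
    nlinarith [Int.ofNat_le.mpr hlam.le]

lemma Iic_eq_filter {m : ℕ} (j : Fin m) : Finset.Iic j = Finset.univ.filter (· ≤ j) := by
  ext i; simp

lemma sum_Iic_fin {lam m : ℕ} (r : Fin m → Fin lam) (j : Fin m) :
    ∑ i ∈ Finset.Iic j, (r i : ℤ) = ∑ i : Fin m, if i ≤ j then (r i : ℤ) else 0 := by
  rw [Iic_eq_filter, Finset.sum_filter]

lemma sum_Iic_cons {lam m : ℕ} (c : Fin lam) (r : Fin m → Fin lam) (j : Fin m) :
    ∑ i ∈ Finset.Iic j.succ, ((Fin.cons c r : Fin (m+1) → Fin lam) i : ℤ)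
      = (c : ℤ) + ∑ i ∈ Finset.Iic j, (r i : ℤ) := by
  rw [sum_Iic_fin, sum_Iic_fin, Fin.sum_univ_succ]
  simp only [Fin.cons_zero, Fin.cons_succ, Fin.zero_le, if_true, Fin.succ_le_succ_iff]

lemma sum_Iic_cons_zero {lam m : ℕ} (c : Fin lam) (r : Fin m → Fin lam) :
    ∑ i ∈ Finset.Iic (0 : Fin (m+1)), ((Fin.cons c r : Fin (m+1) → Fin lam) i : ℤ) = (c : ℤ) := by
  rw [sum_Iic_fin, Fin.sum_univ_succ]
  simp [Fin.le_zero_iff, Fin.succ_ne_zero]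

lemma hitC_cons {lam m : ℕ} (c : Fin lam) (r : Fin m → Fin lam) (p : ℤ) :
    hitC lam (m+1) (Fin.cons c r) p ↔ p = 0 ∨ hitC lam m r (p - (lam + c)) := by
  unfold hitC
  constructor
  · rintro (h | ⟨j, hj⟩)
    · exact Or.inl h
    · rcases Fin.eq_zero_or_eq_succ j with rfl | ⟨i, rfl⟩
      · right; left
        rw [sum_Iic_cons_zero] at hj
        simp at hj ⊢; linarith
      · right; right
        refine ⟨i, ?_⟩
        rw [sum_Iic_cons] at hj
        push_cast [Fin.val_succ] at hj ⊢
        linarith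
  · rintro (h | h | ⟨i, hi⟩)
    · exact Or.inl h
    · right
      refine ⟨0, ?_⟩
      rw [sum_Iic_cons_zero]
      simp; linarith
    · right
      refine ⟨i.succ, ?_⟩
      rw [sum_Iic_cons]
      push_cast [Fin.val_succ] at hi ⊢
      linarith

lemma card_filter_cons {lam m : ℕ} (P : (Fin (m+1) → Fin lam) → Prop)
    [DecidablePred P] [∀ c : Fin lam, DecidablePred fun r : Fin m → Fin lam => P (Fin.cons c r)] :
    (univ.filter P).card
      = ∑ c : Fin lam, (univ.filter fun r : Fin m → Fin lam => P (Fin.cons c r)).card := by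
  rw [Finset.card_eq_sum_card_fiberwise (f := fun r => r 0) (t := univ) (fun _ _ => mem_univ _)]
  refine Finset.sum_congr rfl fun c _ => ?_
  refine (Finset.card_bij (fun r' _ => Fin.cons c r') ?_ ?_ ?_).symm
  · intro r' hr'
    simp only [mem_filter, mem_univ, true_and] at hr' ⊢
    exact ⟨hr', Fin.cons_zero _ _⟩
  · intro r1 h1 r2 h2 h
    simpa using h
  · intro r hr
    simp only [mem_filter, mem_univ, true_and] at hr
    refine ⟨Fin.tail r, ?_, ?_⟩
    · simp only [mem_filter, mem_univ, true_and]
      rw [← hr.2, Fin.cons_self_tail]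
      exact hr.1
    · show Fin.cons c (Fin.tail r) = r
      rw [← hr.2, Fin.cons_self_tail]

lemma filter_hit_empty {lam m : ℕ} (hlam : 0 < lam) (T : Finset ℤ) (f : ℤ → ℤ) {q : ℤ}
    (hq : q ∈ T) (h0 : f q ≠ 0) (hql : f q < lam) :
    (univ.filter fun r : Fin m → Fin lam => ∀ p ∈ T, hitC lam m r (f p)) = ∅ := by
  rw [Finset.filter_eq_empty_iff]
  intro r _ hall
  rcases hitC_pos hlam (hall q hq) with h | h
  · exact h0 h
  · omega

lemma keyA (lam : ℕ) (hlam : 0 < lam) :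
    ∀ (m : ℕ) (T : Finset ℤ),
      (univ.filter fun r : Fin m → Fin lam => ∀ p ∈ T, hitC lam m r p).card
        * lam ^ (T.erase 0).card ≤ lam ^ m := by
  intro m
  induction m with
  | zero =>
    intro T
    by_cases hT : (T.erase 0) = ∅
    · rw [hT]
      simp only [card_empty, pow_zero, mul_one]
      calc (univ.filter fun r : Fin 0 → Fin lam => ∀ p ∈ T, hitC lam 0 r p).card
          ≤ (univ : Finset (Fin 0 → Fin lam)).card := card_le_card (filter_subset _ _)
        _ = 1 := by simp [Finset.card_univ]
    · obtain ⟨q, hq⟩ := Finset.nonempty_iff_ne_empty.2 hT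
      have hq0 : q ≠ 0 := Finset.ne_of_mem_erase hq
      have hqT : q ∈ T := Finset.mem_of_mem_erase hq
      have : (univ.filter fun r : Fin 0 → Fin lam => ∀ p ∈ T, hitC lam 0 r p) = ∅ := by
        rw [Finset.filter_eq_empty_iff]
        intro r _ hall
        rcases hall q hqT with h | ⟨j, _⟩
        · exact hq0 h
        · exact j.elim0
      rw [this]; simp
  | succ m ih =>
    intro T
    rw [card_filter_cons (fun r => ∀ p ∈ T, hitC lam (m+1) r p), Finset.sum_mul]
    set k := (T.erase 0).card with hk
    have hterm : ∀ c : Fin lam,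
        (univ.filter fun r : Fin m → Fin lam => ∀ p ∈ T, hitC lam (m+1) (Fin.cons c r) p)
          = (univ.filter fun r : Fin m → Fin lam =>
              ∀ p ∈ T.erase 0, hitC lam m r (p - ((lam : ℤ) + c))) := by
      intro c
      apply Finset.filter_congr
      intro r _
      constructor
      · intro hall p hp
        rcases (hitC_cons c r p).1 (hall p (Finset.mem_of_mem_erase hp)) with h | h
        · exact absurd h (Finset.ne_of_mem_erase hp)
        · exact h
      · intro hall p hp
        rw [hitC_cons]
        by_cases h0 : p = 0
        · exact Or.inl h0
        · exact Or.inr (hall p (Finset.mem_erase.2 ⟨h0, hp⟩))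
    simp only [hterm]
    -- rewrite each term's filter as a filter over the shifted image set
    have himg : ∀ c : Fin lam,
        (univ.filter fun r : Fin m → Fin lam =>
            ∀ p ∈ T.erase 0, hitC lam m r (p - ((lam : ℤ) + c)))
          = (univ.filter fun r : Fin m → Fin lam =>
              ∀ q ∈ (T.erase 0).image (· - ((lam : ℤ) + c)), hitC lam m r q) := by
      intro c
      apply Finset.filter_congr
      intro r _
      exact Finset.forall_mem_image.symm
    by_cases hT : (T.erase 0) = ∅
    · have hk0 : k = 0 := by rw [hk, hT, card_empty]
      rw [hk0, hT]
      simp only [Finset.notMem_empty, false_implies, implies_true, Finset.filter_true,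
        pow_zero, mul_one]
      simp [Finset.card_univ, pow_succ, mul_comm]
    · obtain ⟨hne⟩ : Nonempty ((T.erase 0) : Finset ℤ).Nonempty :=
        ⟨Finset.nonempty_iff_ne_empty.2 hT⟩
      set P := (T.erase 0).min' hne with hPdef
      have hPmem : P ∈ T.erase 0 := Finset.min'_mem _ _
      have hP0 : P ≠ 0 := Finset.ne_of_mem_erase hPmem
      have hPmin : ∀ p ∈ T.erase 0, P ≤ p := fun p hp => Finset.min'_le _ _ hp
      have hk1 : 1 ≤ k := Finset.card_pos.2 ⟨P, hPmem⟩
      by_cases hPlam : P < (lam : ℤ)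
      · -- all terms zero
        have hz : ∀ c : Fin lam,
            (univ.filter fun r : Fin m → Fin lam =>
                ∀ p ∈ T.erase 0, hitC lam m r (p - ((lam : ℤ) + c))) = ∅ := by
          intro c
          apply filter_hit_empty hlam _ _ hPmem
          · have : (c : ℤ) ≥ 0 := Int.ofNat_nonneg _
            have hl : (0:ℤ) < lam := by exact_mod_cast hlam
            omega
          · have : (c : ℤ) ≥ 0 := Int.ofNat_nonneg _
            have hl : (0:ℤ) < lam := by exact_mod_cast hlam
            omega
        simp only [hz, card_empty, zero_mul, Finset.sum_const_zero]
        positivity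
      · push_neg at hPlam
        by_cases hP2 : P < 2 * (lam : ℤ)
        · -- unique c₀ with lam + c₀ = P; all other terms vanish
          have hc0lt : (P - lam).toNat < lam := by omega
          set c₀ : Fin lam := ⟨(P - lam).toNat, hc0lt⟩ with hc0
          have hc0val : ((lam : ℤ) + (c₀ : ℕ)) = P := by
            simp only [hc0]
            omega
          rw [Finset.sum_eq_single c₀]
          · -- main term
            have hcard : ((((T.erase 0).image (· - ((lam : ℤ) + c₀))).erase 0).card) = k - 1 := by
              have himgset : (((T.erase 0).image (· - ((lam : ℤ) + c₀))).erase 0)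
                  = ((T.erase 0).erase P).image (· - ((lam : ℤ) + c₀)) := by
                ext q
                simp only [Finset.mem_erase, Finset.mem_image, hc0val]
                constructor
                · rintro ⟨hq0, p, hp, rfl⟩
                  exact ⟨p, ⟨by omega, hp⟩, rfl⟩
                · rintro ⟨p, ⟨hpP, hp⟩, rfl⟩
                  exact ⟨by omega, p, hp, rfl⟩
              rw [himgset, Finset.card_image_of_injective _ sub_left_injective,
                Finset.card_erase_of_mem hPmem]
            have := ih ((T.erase 0).image (· - ((lam : ℤ) + c₀)))
            rw [hcard] at this
            rw [himg c₀]
            calc (univ.filter fun r : Fin m → Fin lam =>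
                    ∀ q ∈ (T.erase 0).image (· - ((lam : ℤ) + c₀)), hitC lam m r q).card * lam ^ k
                = ((univ.filter fun r : Fin m → Fin lam =>
                    ∀ q ∈ (T.erase 0).image (· - ((lam : ℤ) + c₀)), hitC lam m r q).card
                      * lam ^ (k - 1)) * lam := by
                  rw [mul_assoc, ← pow_succ]
                  congr 2
                  omega
              _ ≤ lam ^ m * lam := Nat.mul_le_mul_right _ this
              _ = lam ^ (m + 1) := (pow_succ _ _).symm
          · -- other terms vanish
            intro c _ hc
            have hcc : ((lam : ℤ) + (c : ℕ)) ≠ P := by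
              intro h
              apply hc
              have : (c : ℕ) = (c₀ : ℕ) := by omega
              exact Fin.ext this
            have hcb : (c : ℤ) < lam := by exact_mod_cast c.isLt
            have hcnn : (0:ℤ) ≤ (c : ℤ) := Int.ofNat_nonneg _
            rw [filter_hit_empty hlam _ _ hPmem (by omega) (by omega)]
            simp
          · intro h
            exact absurd (Finset.mem_univ c₀) h
        · -- P ≥ 2λ : no element maps to zero
          push_neg at hP2
          have hbound : ∀ c : Fin lam,
              (univ.filter fun r : Fin m → Fin lam =>
                  ∀ p ∈ T.erase 0, hitC lam m r (p - ((lam : ℤ) + c))).card * lam ^ k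
                ≤ lam ^ m := by
            intro c
            have hcb : (c : ℤ) < lam := by exact_mod_cast c.isLt
            have hcnn : (0:ℤ) ≤ (c : ℤ) := Int.ofNat_nonneg _
            have h0notin : (0 : ℤ) ∉ (T.erase 0).image (· - ((lam : ℤ) + c)) := by
              rw [Finset.mem_image]
              rintro ⟨p, hp, hp0⟩
              have := hPmin p hp
              omega
            have hcard : (((T.erase 0).image (· - ((lam : ℤ) + c))).erase 0).card = k := by
              rw [Finset.erase_eq_of_notMem h0notin,
                Finset.card_image_of_injective _ sub_left_injective]
            have := ih ((T.erase 0).image (· - ((lam : ℤ) + c)))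
            rw [hcard] at this
            rw [himg c]
            exact this
          calc ∑ c : Fin lam, (univ.filter fun r : Fin m → Fin lam =>
                  ∀ p ∈ T.erase 0, hitC lam m r (p - ((lam : ℤ) + c))).card * lam ^ k
              ≤ ∑ _c : Fin lam, lam ^ m := Finset.sum_le_sum fun c _ => hbound c
            _ = lam ^ (m + 1) := by simp [pow_succ, mul_comm]

lemma pow_self_le_factorial_exp : ∀ k : ℕ, (k : ℝ) ^ k ≤ (k.factorial : ℝ) * Real.exp 1 ^ k := by
  intro k
  induction k with
  | zero => simp
  | succ k ih =>
    rcases Nat.eq_zero_or_pos k with rfl | hk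
    · simpa [Nat.factorial] using Real.one_le_exp (by norm_num : (0:ℝ) ≤ 1)
    · have hk1 : (1 : ℝ) ≤ (k : ℝ) := by exact_mod_cast hk
      have hkpos : (0:ℝ) < k := by linarith
      have h1 : ((k:ℝ) + 1) ^ k ≤ (k:ℝ) ^ k * Real.exp 1 := by
        have hle : (1 / (k:ℝ) + 1) ≤ Real.exp (1 / k) := Real.add_one_le_exp _
        have hp : (1 / (k:ℝ) + 1) ^ k ≤ Real.exp (1 / k) ^ k := by
          apply pow_le_pow_left₀ (by positivity) hle
        have he : Real.exp (1 / (k:ℝ)) ^ k = Real.exp 1 := by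
          rw [← Real.exp_nat_mul]
          congr 1
          field_simp
        rw [he] at hp
        have heq : ((k:ℝ) + 1) ^ k = (1 / (k:ℝ) + 1) ^ k * (k:ℝ) ^ k := by
          rw [← mul_pow]
          field_simp
          ring
        rw [heq]
        calc (1 / (k:ℝ) + 1) ^ k * (k:ℝ) ^ k ≤ Real.exp 1 * (k:ℝ) ^ k := by
              apply mul_le_mul_of_nonneg_right hp (by positivity)
          _ = (k:ℝ) ^ k * Real.exp 1 := mul_comm _ _
      have hexp : (0:ℝ) < Real.exp 1 := Real.exp_pos 1
      have hfac : (0:ℝ) ≤ (Nat.factorial k : ℝ) := by positivity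
      calc ((k+1 : ℕ) : ℝ) ^ (k+1) = ((k:ℝ) + 1) * ((k:ℝ)+1) ^ k := by
            push_cast; ring
        _ ≤ ((k:ℝ) + 1) * ((k:ℝ) ^ k * Real.exp 1) := by
            apply mul_le_mul_of_nonneg_left h1 (by positivity)
        _ ≤ ((k:ℝ) + 1) * ((Nat.factorial k : ℝ) * Real.exp 1 ^ k * Real.exp 1) := by
            apply mul_le_mul_of_nonneg_left _ (by positivity)
            apply mul_le_mul_of_nonneg_right ih hexp.le
        _ = ((k+1: ℕ).factorial : ℝ) * Real.exp 1 ^ (k+1) := by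
            rw [Nat.factorial_succ]
            push_cast
            ring

lemma stepC (lam n t k : ℕ) (hlam : 0 < lam) (ht : 0 < t) (hn : 6 ≤ n)
    (hL2 : 2 * Real.logb 2 n ≤ (k : ℝ))
    (hLk : (t : ℝ) * Real.logb 2 n ^ 2 ≤ (lam : ℝ) * k) :
    (t.choose k : ℝ) * (n : ℝ) ^ 2 ≤ (lam : ℝ) ^ k := by
  set L := Real.logb 2 n with hLdef
  have hn0 : (0:ℝ) < n := by positivity
  have hL52 : (5/2 : ℝ) ≤ L := by
    rw [hLdef, Real.le_logb_iff_rpow_le (by norm_num) hn0]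
    have h1 : ((2:ℝ) ^ ((5:ℝ)/2)) ^ (2:ℕ) ≤ (6:ℝ) ^ (2:ℕ) := by
      rw [← Real.rpow_natCast ((2:ℝ) ^ ((5:ℝ)/2)) 2, ← Real.rpow_mul (by norm_num)]
      rw [show (5:ℝ)/2 * ((2:ℕ):ℝ) = ((5:ℕ):ℝ) by push_cast; ring, Real.rpow_natCast]
      norm_num
    have h2 : (2:ℝ) ^ ((5:ℝ)/2) ≤ 6 := by
      apply le_of_pow_le_pow_left₀ (by norm_num) (by norm_num) h1
    calc (2:ℝ) ^ ((5:ℝ)/2) ≤ 6 := h2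
      _ ≤ n := by exact_mod_cast hn
  have hLpos : (0:ℝ) < L := by linarith
  have hk5 : (5 : ℝ) ≤ (k:ℝ) := by nlinarith
  have hkpos : 0 < k := by exact_mod_cast (by linarith : (0:ℝ) < k)
  set e := Real.exp 1 with hedef
  have hepos : (0:ℝ) < e := Real.exp_pos 1
  have heub : e < 2.7182818286 := Real.exp_one_lt_d9
  have hL2e : 2 * e ≤ L ^ 2 := by nlinarith
  -- n² ≤ 2^k
  have hn2k : (n:ℝ) ^ 2 ≤ (2:ℝ) ^ k := by
    have h1 : (n:ℝ) = (2:ℝ) ^ L := (Real.rpow_logb (by norm_num) (by norm_num) hn0).symm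
    have h2 : (n:ℝ) ^ 2 = (2:ℝ) ^ (2 * L) := by
      rw [h1, ← Real.rpow_natCast ((2:ℝ) ^ L) 2, ← Real.rpow_mul (by norm_num)]
      norm_num
      ring_nf
    rw [h2, ← Real.rpow_natCast 2 k]
    exact Real.rpow_le_rpow_of_exponent_le (by norm_num) hL2
  -- 2^k ≤ (L²/e)^k
  have h2Lek : (2:ℝ) ^ k ≤ (L ^ 2 / e) ^ k := by
    apply pow_le_pow_left₀ (by norm_num)
    rw [le_div_iff₀ hepos]; linarith
  have hn2 : (n:ℝ) ^ 2 ≤ (L ^ 2 / e) ^ k := le_trans hn2k h2Lek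
  -- choose bound
  have hCf : (t.choose k : ℝ) * (k.factorial : ℝ) ≤ (t:ℝ) ^ k := by
    have : t.choose k * k.factorial ≤ t ^ k := by
      calc t.choose k * k.factorial = t.descFactorial k := by
            rw [Nat.descFactorial_eq_factorial_mul_choose]; ring
        _ ≤ t ^ k := Nat.descFactorial_le_pow _ _
    exact_mod_cast this
  have hfpos : (0:ℝ) < (k.factorial : ℝ) := by positivity
  have hC : (t.choose k : ℝ) ≤ (t:ℝ) ^ k / (k.factorial : ℝ) := by
    rw [le_div_iff₀ hfpos]; exact hCf
  have hkk : (k:ℝ) ^ k ≤ (k.factorial : ℝ) * e ^ k := pow_self_le_factorial_exp k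
  -- combine
  have hstep : (t.choose k : ℝ) * (n:ℝ) ^ 2
      ≤ ((t:ℝ) ^ k / (k.factorial : ℝ)) * ((L ^ 2 / e) ^ k) := by
    apply mul_le_mul hC hn2 (by positivity) (by positivity)
  have hmain : ((t:ℝ) ^ k / (k.factorial : ℝ)) * ((L ^ 2 / e) ^ k)
      ≤ ((t:ℝ) * L ^ 2 / k) ^ k := by
    have hkkpos : (0:ℝ) < (k:ℝ) ^ k := by positivity
    rw [div_pow, div_mul_div_comm, div_pow, mul_pow]
    apply div_le_div_of_nonneg_left (by positivity) hkkpos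
    calc (k:ℝ) ^ k ≤ (k.factorial : ℝ) * e ^ k := hkk
      _ = (k.factorial : ℝ) * e ^ k := rfl
  have hlast : ((t:ℝ) * L ^ 2 / k) ^ k ≤ (lam:ℝ) ^ k := by
    apply pow_le_pow_left₀ (by positivity)
    rw [div_le_iff₀ (by positivity)]
    linarith
  linarith

/-- if `x` appears at most `t` times among `a_1, …, a_ℓ`, then with
probability at least `1 − 1/n²` (over the i.i.d. uniform shifts `r_i ∈ {0,…,λ−1}`,
modelled by the uniform counting measure on `r : Fin ℓ → Fin λ`, which determines all
connector positions `b_j = (j+1)·λ + r_1 + ⋯ + r_{j+1} ≤ ℓ`), the number of connector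
positions `b_j ≤ ℓ` with `a_{b_j} = x` is at most `t·(log₂ n)²/λ`. -/
theorem statement_11 {S : Type} (lam ell n t : ℕ) (hlam : 0 < lam) (hell : 0 < ell)
    (hn : 6 ≤ n) (ht : 0 < t)
    (hcond : 2 * (lam : ℝ) ≤ (t : ℝ) * Real.logb 2 n)
    (a : ℕ → S) (x : S)
    (hx : (((Finset.Icc 1 ell).filter fun p => a p = x).card) ≤ t) :
    1 - 1 / (n : ℝ) ^ 2 ≤
      ((Finset.univ.filter fun r : Fin ell → Fin lam =>
          ((Finset.univ.filter fun j : Fin ell =>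
              ((j : ℕ) + 1) * lam + (∑ i ∈ Finset.Iic j, (r i : ℕ)) ≤ ell ∧
                a (((j : ℕ) + 1) * lam + ∑ i ∈ Finset.Iic j, (r i : ℕ)) = x).card : ℝ)
            ≤ (t : ℝ) * (Real.logb 2 n) ^ 2 / (lam : ℝ)).card : ℝ)
        / (lam : ℝ) ^ ell := by
  have hlamR : (0:ℝ) < lam := by exact_mod_cast hlam
  have hn0 : (0:ℝ) < n := by positivity
  set L := Real.logb 2 n with hLdef
  have hLpos : (0:ℝ) < L := Real.logb_pos (by norm_num)
    (by exact_mod_cast lt_of_lt_of_le (by norm_num : (1:ℕ) < 6) hn)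
  set θ := (t:ℝ) * L ^ 2 / (lam : ℝ) with hθdef
  have hθ0 : 0 ≤ θ := by positivity
  set k := ⌊θ⌋₊ + 1 with hkdef
  have hθk : θ < (k : ℝ) := by
    push_cast [hkdef]
    exact Nat.lt_floor_add_one θ
  have hLk : (t:ℝ) * L ^ 2 ≤ (lam:ℝ) * k := by
    rw [hθdef] at hθk
    rw [div_lt_iff₀ hlamR] at hθk
    nlinarith
  have h2Lk : 2 * L ≤ (k : ℝ) := by
    have h2 : 2 * L ≤ θ := by
      rw [hθdef, le_div_iff₀ hlamR]
      nlinarith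
    linarith
  -- the predicate and its complement
  set Q : (Fin ell → Fin lam) → Prop := fun r =>
    ((Finset.univ.filter fun j : Fin ell =>
        ((j : ℕ) + 1) * lam + (∑ i ∈ Finset.Iic j, (r i : ℕ)) ≤ ell ∧
          a (((j : ℕ) + 1) * lam + ∑ i ∈ Finset.Iic j, (r i : ℕ)) = x).card : ℝ) ≤ θ
    with hQdef
  set Bad : Finset ℕ := (Finset.Icc 1 ell).filter (fun p => a p = x) with hBaddef
  set Ecal : Finset ℕ → Finset (Fin ell → Fin lam) := fun T =>
    univ.filter fun r : Fin ell → Fin lam => ∀ p ∈ T, hitC lam ell r (p : ℤ) with hEdef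
  -- Step B: the bad event is covered by the union over k-subsets of Bad
  have hsub : (univ.filter fun r => ¬ Q r) ⊆ (Bad.powersetCard k).biUnion Ecal := by
    intro r hr
    rw [mem_filter] at hr
    have hcnt : k ≤ (Finset.univ.filter fun j : Fin ell =>
        ((j : ℕ) + 1) * lam + (∑ i ∈ Finset.Iic j, (r i : ℕ)) ≤ ell ∧
          a (((j : ℕ) + 1) * lam + ∑ i ∈ Finset.Iic j, (r i : ℕ)) = x).card := by
      have := hr.2
      rw [hQdef, not_le] at this
      rw [hkdef]
      have := (Nat.floor_lt hθ0).2 this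
      omega
    set b : Fin ell → ℕ := fun j => ((j : ℕ) + 1) * lam + ∑ i ∈ Finset.Iic j, (r i : ℕ)
      with hbdef
    set J := (Finset.univ.filter fun j : Fin ell => b j ≤ ell ∧ a (b j) = x) with hJdef
    have hbmono : StrictMono b := by
      intro j j' hjj
      have h1 : ((j:ℕ) + 1) * lam < ((j':ℕ) + 1) * lam :=
        (Nat.mul_lt_mul_right hlam).2 (Nat.succ_lt_succ hjj)
      have h2 : ∑ i ∈ Finset.Iic j, (r i : ℕ) ≤ ∑ i ∈ Finset.Iic j', (r i : ℕ) :=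
        Finset.sum_le_sum_of_subset (Finset.Iic_subset_Iic.2 hjj.le)
      exact Nat.add_lt_add_of_lt_of_le h1 h2
    have hPoscard : k ≤ (J.image b).card := by
      rw [Finset.card_image_of_injective _ hbmono.injective]
      exact hcnt
    have hPosBad : J.image b ⊆ Bad := by
      intro q hq
      rw [Finset.mem_image] at hq
      obtain ⟨j, hj, rfl⟩ := hq
      rw [hJdef, mem_filter] at hj
      rw [hBaddef, mem_filter, Finset.mem_Icc]
      refine ⟨⟨?_, hj.2.1⟩, hj.2.2⟩
      have h1 : 1 ≤ ((j:ℕ) + 1) * lam := Nat.one_le_iff_ne_zero.2 (by positivity)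
      exact le_trans h1 (Nat.le_add_right _ _)
    obtain ⟨T, hTPos, hTcard⟩ := Finset.exists_subset_card_eq hPoscard
    rw [Finset.mem_biUnion]
    refine ⟨T, Finset.mem_powersetCard.2 ⟨hTPos.trans hPosBad, hTcard⟩, ?_⟩
    rw [hEdef, mem_filter]
    refine ⟨mem_univ _, fun p hp => ?_⟩
    have := hTPos hp
    rw [Finset.mem_image] at this
    obtain ⟨j, _, rfl⟩ := this
    refine Or.inr ⟨j, ?_⟩
    rw [hbdef]
    push_cast
    ring
  -- per-subset bound via keyA
  have hperT : ∀ T ∈ Bad.powersetCard k, (Ecal T).card * lam ^ k ≤ lam ^ ell := by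
    intro T hT
    rw [Finset.mem_powersetCard] at hT
    have h0T : (0:ℤ) ∉ T.image (fun p : ℕ => (p : ℤ)) := by
      rw [Finset.mem_image]
      rintro ⟨p, hp, hp0⟩
      have := hT.1 hp
      rw [hBaddef, mem_filter, Finset.mem_Icc] at this
      omega
    have hcardT : ((T.image (fun p : ℕ => (p : ℤ))).erase 0).card = k := by
      rw [Finset.erase_eq_of_notMem h0T,
        Finset.card_image_of_injective _ Nat.cast_injective, hT.2]
    have hEeq : Ecal T = univ.filter fun r : Fin ell → Fin lam =>
        ∀ q ∈ T.image (fun p : ℕ => (p : ℤ)), hitC lam ell r q := by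
      rw [hEdef]
      apply Finset.filter_congr
      intro r _
      exact Finset.forall_mem_image.symm
    rw [hEeq]
    have := keyA lam hlam ell (T.image (fun p : ℕ => (p : ℤ)))
    rw [hcardT] at this
    exact this
  -- combine: bad count bound in ℕ
  have hB : (univ.filter fun r => ¬ Q r).card * lam ^ k ≤ t.choose k * lam ^ ell := by
    calc (univ.filter fun r => ¬ Q r).card * lam ^ k
        ≤ ((Bad.powersetCard k).biUnion Ecal).card * lam ^ k :=
          Nat.mul_le_mul_right _ (Finset.card_le_card hsub)
      _ ≤ (∑ T ∈ Bad.powersetCard k, (Ecal T).card) * lam ^ k :=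
          Nat.mul_le_mul_right _ Finset.card_biUnion_le
      _ = ∑ T ∈ Bad.powersetCard k, (Ecal T).card * lam ^ k := Finset.sum_mul _ _ _
      _ ≤ ∑ _T ∈ Bad.powersetCard k, lam ^ ell := Finset.sum_le_sum hperT
      _ = (Bad.powersetCard k).card * lam ^ ell := by rw [Finset.sum_const, smul_eq_mul]
      _ = Bad.card.choose k * lam ^ ell := by rw [Finset.card_powersetCard]
      _ ≤ t.choose k * lam ^ ell := Nat.mul_le_mul_right _ (Nat.choose_le_choose _ hx)
  -- step C
  have hC : (t.choose k : ℝ) * (n : ℝ) ^ 2 ≤ (lam : ℝ) ^ k :=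
    stepC lam n t k hlam ht hn h2Lk hLk
  -- total count
  have htot : (univ.filter Q).card + (univ.filter fun r => ¬ Q r).card = lam ^ ell := by
    rw [Finset.card_filter_add_card_filter_not, Finset.card_univ]
    simp [Fintype.card_fun]
  -- real arithmetic conclusion
  have hlpow : (0:ℝ) < (lam:ℝ) ^ ell := by positivity
  have hlpowk : (0:ℝ) < (lam:ℝ) ^ k := by positivity
  have hBr : ((univ.filter fun r => ¬ Q r).card : ℝ) * (lam:ℝ) ^ k
      ≤ (t.choose k : ℝ) * (lam:ℝ) ^ ell := by exact_mod_cast hB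
  have hbadn : ((univ.filter fun r => ¬ Q r).card : ℝ) * (n:ℝ) ^ 2 ≤ (lam:ℝ) ^ ell := by
    have h1 : (((univ.filter fun r => ¬ Q r).card : ℝ) * (n:ℝ) ^ 2) * (lam:ℝ) ^ k
        ≤ (lam:ℝ) ^ ell * (lam:ℝ) ^ k := by
      calc (((univ.filter fun r => ¬ Q r).card : ℝ) * (n:ℝ) ^ 2) * (lam:ℝ) ^ k
          = (((univ.filter fun r => ¬ Q r).card : ℝ) * (lam:ℝ) ^ k) * (n:ℝ) ^ 2 := by ring
        _ ≤ ((t.choose k : ℝ) * (lam:ℝ) ^ ell) * (n:ℝ) ^ 2 :=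
            mul_le_mul_of_nonneg_right hBr (by positivity)
        _ = ((t.choose k : ℝ) * (n:ℝ) ^ 2) * (lam:ℝ) ^ ell := by ring
        _ ≤ (lam:ℝ) ^ k * (lam:ℝ) ^ ell := mul_le_mul_of_nonneg_right hC hlpow.le
        _ = (lam:ℝ) ^ ell * (lam:ℝ) ^ k := by ring
    exact le_of_mul_le_mul_right h1 hlpowk
  have hgood : ((univ.filter Q).card : ℝ) = (lam:ℝ) ^ ell
      - ((univ.filter fun r => ¬ Q r).card : ℝ) := by
    rw [eq_sub_iff_add_eq]
    exact_mod_cast htot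
  rw [hgood, sub_div, div_self hlpow.ne']
  rw [sub_le_sub_iff_left]
  rw [div_le_div_iff₀ hlpow (by positivity)]
  linarith
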